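/- arXiv:1507.00596 — 5 statements merged into one kernel-verified Lean document; each statement's English description precedes it below -/
import Mathlib

section
/- For every integer k ≥ 1 and every z ∈ ℂ∖[−1,1], (1/π) ∫_{−1}^{1} log|t−z| · U_k(t)·√(1−t²) dt = (1/2)·Re( (J₊⁻¹(z))^{k+2}/(k+2) − (J₊⁻¹(z))^{k}/k ). -/
open MeasureTheory Filter Set Polynomial Complex

/-- The inverse Joukowsky transform mapping the slit plane to the unit disk,
`J₊⁻¹(z) = z - (z-1)^{1/2} (z+1)^{1/2}` with principal-branch square roots. -/
noncomputable def Jinv (z : ℂ) : ℂ :=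
  z - (z - 1) ^ ((1 : ℂ) / 2) * (z + 1) ^ ((1 : ℂ) / 2)

section alg
variable {z : ℂ} (h1 : z ≠ 1) (h2 : z ≠ -1)

lemma sq_fact (h1 : z ≠ 1) (h2 : z ≠ -1) :
    ((z - 1) ^ ((1:ℂ)/2) * (z + 1) ^ ((1:ℂ)/2)) * ((z - 1) ^ ((1:ℂ)/2) * (z + 1) ^ ((1:ℂ)/2))
      = (z - 1) * (z + 1) := by
  have ha : z - 1 ≠ 0 := sub_ne_zero.mpr h1
  have hb : z + 1 ≠ 0 := by
    intro h; apply h2; linear_combination h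
  have e1 : (z - 1) ^ ((1:ℂ)/2) * (z - 1) ^ ((1:ℂ)/2) = z - 1 := by
    rw [← Complex.cpow_add _ _ ha]; norm_num
  have e2 : (z + 1) ^ ((1:ℂ)/2) * (z + 1) ^ ((1:ℂ)/2) = z + 1 := by
    rw [← Complex.cpow_add _ _ hb]; norm_num
  calc ((z - 1) ^ ((1:ℂ)/2) * (z + 1) ^ ((1:ℂ)/2)) * ((z - 1) ^ ((1:ℂ)/2) * (z + 1) ^ ((1:ℂ)/2))
      = ((z - 1) ^ ((1:ℂ)/2) * (z - 1) ^ ((1:ℂ)/2)) * ((z + 1) ^ ((1:ℂ)/2) * (z + 1) ^ ((1:ℂ)/2)) := by ring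
    _ = (z - 1) * (z + 1) := by rw [e1, e2]

lemma Jinv_mul (h1 : z ≠ 1) (h2 : z ≠ -1) :
    Jinv z * (z + (z - 1) ^ ((1:ℂ)/2) * (z + 1) ^ ((1:ℂ)/2)) = 1 := by
  have := sq_fact h1 h2
  unfold Jinv
  linear_combination -this

lemma Jinv_ne_zero (h1 : z ≠ 1) (h2 : z ≠ -1) : Jinv z ≠ 0 :=
  left_ne_zero_of_mul_eq_one (Jinv_mul h1 h2)

lemma Jinv_inv (h1 : z ≠ 1) (h2 : z ≠ -1) :
    (Jinv z)⁻¹ = z + (z - 1) ^ ((1:ℂ)/2) * (z + 1) ^ ((1:ℂ)/2) :=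
  inv_eq_of_mul_eq_one_right (Jinv_mul h1 h2)

lemma z_eq_add (h1 : z ≠ 1) (h2 : z ≠ -1) : Jinv z + (Jinv z)⁻¹ = 2 * z := by
  rw [Jinv_inv h1 h2]; unfold Jinv; ring

end alg
open MeasureTheory Filter Set Polynomial Complex Real

lemma cpow_half_re {u : ℂ} (hu : u ≠ 0) :
    (u ^ ((1:ℂ)/2)).re = Real.exp ((Complex.log u).re / 2) * Real.cos (Complex.arg u / 2) := by
  rw [Complex.cpow_def_of_ne_zero hu, Complex.exp_re]
  congr 1 <;> simp [Complex.log_im, Complex.div_ofReal_re, div_eq_mul_inv]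

lemma cpow_half_im {u : ℂ} (hu : u ≠ 0) :
    (u ^ ((1:ℂ)/2)).im = Real.exp ((Complex.log u).re / 2) * Real.sin (Complex.arg u / 2) := by
  rw [Complex.cpow_def_of_ne_zero hu, Complex.exp_im]
  congr 1 <;> simp [Complex.log_im, Complex.div_ofReal_re, div_eq_mul_inv]

lemma cpow_half_cases {u : ℂ} (hu : u ≠ 0) :
    (0 < u.im → 0 < (u ^ ((1:ℂ)/2)).re ∧ 0 < (u ^ ((1:ℂ)/2)).im) ∧
    (u.im < 0 → 0 < (u ^ ((1:ℂ)/2)).re ∧ (u ^ ((1:ℂ)/2)).im < 0) ∧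
    (u.im = 0 → 0 < u.re → 0 < (u ^ ((1:ℂ)/2)).re ∧ (u ^ ((1:ℂ)/2)).im = 0) ∧
    (u.im = 0 → u.re < 0 → (u ^ ((1:ℂ)/2)).re = 0 ∧ 0 < (u ^ ((1:ℂ)/2)).im) := by
  have hre := cpow_half_re hu
  have him := cpow_half_im hu
  have hexp : 0 < Real.exp ((Complex.log u).re / 2) := Real.exp_pos _
  have harg1 : -Real.pi < Complex.arg u := Complex.neg_pi_lt_arg u
  have harg2 : Complex.arg u ≤ Real.pi := Complex.arg_le_pi u
  have hpi : 0 < Real.pi := Real.pi_pos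
  refine ⟨fun him0 => ?_, fun him0 => ?_, fun him0 hre0 => ?_, fun him0 hre0 => ?_⟩
  · have h1 : 0 < Complex.arg u := by
      rcases (Complex.arg_nonneg_iff.mpr him0.le).lt_or_eq with h | h
      · exact h
      · exact absurd (Complex.arg_eq_zero_iff.mp h.symm).2 (by linarith)
    have h2 : Complex.arg u < Real.pi := by
      rcases harg2.lt_or_eq with h | h
      · exact h
      · exact absurd (Complex.arg_eq_pi_iff.mp h).2 (by linarith)
    refine ⟨?_, ?_⟩
    · rw [hre]
      have : 0 < Real.cos (Complex.arg u / 2) :=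
        Real.cos_pos_of_mem_Ioo ⟨by linarith, by linarith⟩
      positivity
    · rw [him]
      have : 0 < Real.sin (Complex.arg u / 2) :=
        Real.sin_pos_of_pos_of_lt_pi (by linarith) (by linarith)
      positivity
  · have h1 : Complex.arg u < 0 := Complex.arg_neg_iff.mpr him0
    refine ⟨?_, ?_⟩
    · rw [hre]
      have : 0 < Real.cos (Complex.arg u / 2) :=
        Real.cos_pos_of_mem_Ioo ⟨by linarith, by linarith⟩
      positivity
    · rw [him]
      have : Real.sin (Complex.arg u / 2) < 0 := by
        apply Real.sin_neg_of_neg_of_neg_pi_lt (by linarith) (by linarith)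
      nlinarith
  · have h0 : Complex.arg u = 0 := Complex.arg_eq_zero_iff.mpr ⟨hre0.le, him0⟩
    rw [hre, him, h0]
    simp [hexp]
  · have h0 : Complex.arg u = Real.pi := Complex.arg_eq_pi_iff.mpr ⟨hre0, him0⟩
    rw [hre, him, h0]
    simp [Real.cos_pi_div_two, Real.sin_pi_div_two, hexp]


section slit
variable {z : ℂ} (hz : z ∉ Complex.ofReal '' Set.Icc (-1 : ℝ) 1)

lemma slit_ne_one (hz : z ∉ Complex.ofReal '' Set.Icc (-1 : ℝ) 1) : z ≠ 1 := by
  rintro rfl; exact hz ⟨1, by norm_num⟩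

lemma slit_ne_neg_one (hz : z ∉ Complex.ofReal '' Set.Icc (-1 : ℝ) 1) : z ≠ -1 := by
  rintro rfl; exact hz ⟨-1, by norm_num, by norm_num⟩

lemma slit_real (hz : z ∉ Complex.ofReal '' Set.Icc (-1 : ℝ) 1) (him : z.im = 0) :
    z.re < -1 ∨ 1 < z.re := by
  by_contra h
  push_neg at h
  exact hz ⟨z.re, ⟨by linarith [h.1], by linarith [h.2]⟩, Complex.ext rfl him.symm⟩

lemma re_inner_pos (hz : z ∉ Complex.ofReal '' Set.Icc (-1 : ℝ) 1) :
    0 < ((z-1) ^ ((1:ℂ)/2)).re * ((z+1) ^ ((1:ℂ)/2)).re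
      + ((z-1) ^ ((1:ℂ)/2)).im * ((z+1) ^ ((1:ℂ)/2)).im := by
  have ha : z - 1 ≠ 0 := sub_ne_zero.mpr (slit_ne_one hz)
  have hb : z + 1 ≠ 0 := fun h => slit_ne_neg_one hz (by linear_combination h)
  obtain ⟨Ha1, Ha2, Ha3, Ha4⟩ := cpow_half_cases ha
  obtain ⟨Hb1, Hb2, Hb3, Hb4⟩ := cpow_half_cases hb
  have hia : (z - 1).im = z.im := by simp
  have hib : (z + 1).im = z.im := by simp
  rcases lt_trichotomy z.im 0 with h | h | h
  · obtain ⟨p1, p2⟩ := Ha2 (by rw [hia]; exact h)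
    obtain ⟨q1, q2⟩ := Hb2 (by rw [hib]; exact h)
    nlinarith
  · rcases slit_real hz h with hr | hr
    · obtain ⟨p1, p2⟩ := Ha4 (by rw [hia]; exact h) (by simp; linarith)
      obtain ⟨q1, q2⟩ := Hb4 (by rw [hib]; exact h) (by simp; linarith)
      nlinarith
    · obtain ⟨p1, p2⟩ := Ha3 (by rw [hia]; exact h) (by simp; linarith)
      obtain ⟨q1, q2⟩ := Hb3 (by rw [hib]; exact h) (by simp; linarith)
      nlinarith
  · obtain ⟨p1, p2⟩ := Ha1 (by rw [hia]; exact h)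
    obtain ⟨q1, q2⟩ := Hb1 (by rw [hib]; exact h)
    nlinarith

lemma abs_Jinv_lt_one (hz : z ∉ Complex.ofReal '' Set.Icc (-1 : ℝ) 1) :
    ‖Jinv z‖ < 1 := by
  have h1 := slit_ne_one hz
  have h2 := slit_ne_neg_one hz
  set a := (z-1) ^ ((1:ℂ)/2) with ha_def
  set b := (z+1) ^ ((1:ℂ)/2) with hb_def
  have hsq := sq_fact h1 h2
  have hz2 : z = (a*a + b*b)/2 := by
    have ha : a * a = z - 1 := by
      rw [ha_def, ← Complex.cpow_add _ _ (sub_ne_zero.mpr h1)]; norm_num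
    have hb : b * b = z + 1 := by
      rw [hb_def, ← Complex.cpow_add _ _ (show z + 1 ≠ 0 from fun h => h2 (by linear_combination h))]
      norm_num
    rw [ha, hb]; ring
  have hkey : 0 < z.re * (a*b).re + z.im * (a*b).im := by
    have hinner := re_inner_pos hz
    have hna : 0 < Complex.normSq a + Complex.normSq b := by
      have ha0 : a ≠ 0 := by
        rw [ha_def]
        intro h
        exact sub_ne_zero.mpr h1 (Complex.cpow_eq_zero_iff _ _ |>.mp h).1
      have := Complex.normSq_pos.mpr ha0
      have := Complex.normSq_nonneg b
      linarith
    have hz_re : z.re = ((a*a+b*b)/2).re := by rw [← hz2]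
    have hz_im : z.im = ((a*a+b*b)/2).im := by rw [← hz2]
    rw [hz_re, hz_im]
    simp only [Complex.div_re, Complex.div_im, Complex.add_re, Complex.add_im,
      Complex.mul_re, Complex.mul_im, Complex.normSq_apply] at *
    norm_num
    nlinarith [hinner, hna]
  -- normSq comparison
  have hlt : Complex.normSq (z - a*b) < Complex.normSq (z + a*b) := by
    simp only [Complex.normSq_apply, Complex.sub_re, Complex.sub_im, Complex.add_re, Complex.add_im]
    nlinarith
  have hmul : Complex.normSq (z - a*b) * Complex.normSq (z + a*b) = 1 := by
    rw [← Complex.normSq_mul]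
    have : (z - a*b) * (z + a*b) = 1 := by linear_combination -hsq
    rw [this, Complex.normSq_one]
  have hn : Complex.normSq (Jinv z) < 1 := by
    have h0 : 0 ≤ Complex.normSq (z - a*b) := Complex.normSq_nonneg _
    have : Jinv z = z - a*b := rfl
    rw [this]
    nlinarith
  have := Complex.sq_norm (Jinv z)
  nlinarith [norm_nonneg (Jinv z)]

end slit

section factor
variable {z : ℂ}

lemma factor_eq (hz : z ∉ Complex.ofReal '' Set.Icc (-1 : ℝ) 1) (θ : ℝ) :
    ((Real.cos θ : ℂ) - z)
      = -((1 - Jinv z * Complex.exp (θ * Complex.I))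
          * (1 - Jinv z * Complex.exp (-θ * Complex.I)) / (2 * Jinv z)) := by
  have h1 := slit_ne_one hz
  have h2 := slit_ne_neg_one hz
  have hw0 : Jinv z ≠ 0 := Jinv_ne_zero h1 h2
  have hzz : Jinv z + (Jinv z)⁻¹ = 2 * z := z_eq_add h1 h2
  have he : Complex.exp (θ * Complex.I) * Complex.exp (-θ * Complex.I) = 1 := by
    rw [← Complex.exp_add]; ring_nf; exact Complex.exp_zero
  have hc : (Real.cos θ : ℂ)
      = (Complex.exp (θ * Complex.I) + Complex.exp (-θ * Complex.I)) / 2 := by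
    rw [Complex.ofReal_cos, Complex.cos]
  have hwi : Jinv z * (Jinv z)⁻¹ = 1 := mul_inv_cancel₀ hw0
  have h2zw : Jinv z ^ 2 + 1 = 2 * z * Jinv z := by
    have := congrArg (· * Jinv z) hzz
    calc Jinv z ^ 2 + 1 = (Jinv z + (Jinv z)⁻¹) * Jinv z - (Jinv z)⁻¹ * Jinv z + 1 := by ring
      _ = 2 * z * Jinv z := by rw [hzz, inv_mul_cancel₀ hw0]; ring
  have h2w : (2 : ℂ) * Jinv z ≠ 0 := by simpa using hw0
  rw [← neg_div, eq_div_iff h2w]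
  linear_combination (2 * Jinv z) * hc + (Jinv z ^ 2) * he + h2zw

end factor

section series
variable {z : ℂ}

lemma abs_exp_unit (θ : ℝ) : ‖Complex.exp (θ * Complex.I)‖ = 1 := by
  rw [Complex.norm_exp]
  simp

lemma one_sub_ne {w c : ℂ} (hw : ‖w‖ < 1) (hc : ‖c‖ = 1) :
    1 - w * c ≠ 0 := by
  intro h
  have : w * c = 1 := by linear_combination -h
  have := congrArg (‖·‖) this
  rw [norm_mul, hc, mul_one, norm_one] at this
  exact absurd this hw.ne

lemma log_decomp (hz : z ∉ Complex.ofReal '' Set.Icc (-1 : ℝ) 1) (θ : ℝ) :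
    Real.log (‖(Real.cos θ : ℂ) - z‖)
      = Real.log (‖1 - Jinv z * Complex.exp (θ * Complex.I)‖)
        + Real.log (‖1 - Jinv z * Complex.exp (-θ * Complex.I)‖)
        - Real.log (2 * ‖Jinv z‖) := by
  have hw0 : Jinv z ≠ 0 := Jinv_ne_zero (slit_ne_one hz) (slit_ne_neg_one hz)
  have hwlt := abs_Jinv_lt_one hz
  have hu : (1 : ℂ) - Jinv z * Complex.exp (θ * Complex.I) ≠ 0 :=
    one_sub_ne hwlt (abs_exp_unit θ)
  have hv : (1 : ℂ) - Jinv z * Complex.exp (-θ * Complex.I) ≠ 0 := by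
    have : ‖Complex.exp (-θ * Complex.I)‖ = 1 := by
      simpa using abs_exp_unit (-θ)
    exact one_sub_ne hwlt this
  rw [factor_eq hz θ]
  rw [norm_neg, norm_div, norm_mul, norm_mul]
  have habs2 : ‖(2:ℂ)‖ = 2 := by simp
  rw [Real.log_div (mul_ne_zero (norm_ne_zero_iff.mpr hu) (norm_ne_zero_iff.mpr hv))
      (by rw [habs2]; exact mul_ne_zero two_ne_zero (norm_ne_zero_iff.mpr hw0)),
    Real.log_mul (norm_ne_zero_iff.mpr hu) (norm_ne_zero_iff.mpr hv), habs2]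

lemma pointwise_hasSum {z : ℂ} (hz : z ∉ Complex.ofReal '' Set.Icc (-1 : ℝ) 1) (θ : ℝ) :
    HasSum (fun n : ℕ => 2 * ((Jinv z) ^ n).re * Real.cos (n * θ) / n)
      (-(Real.log (‖(Real.cos θ : ℂ) - z‖)
          + Real.log (2 * ‖Jinv z‖))) := by
  set w := Jinv z with hw
  have hwlt := abs_Jinv_lt_one hz
  have hu : ‖w * Complex.exp (θ * Complex.I)‖ < 1 := by
    rw [norm_mul, Complex.norm_exp]
    simpa using hwlt
  have hv : ‖w * Complex.exp (-θ * Complex.I)‖ < 1 := by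
    rw [norm_mul, Complex.norm_exp]
    simpa using hwlt
  have Hu := Complex.hasSum_taylorSeries_neg_log hu
  have Hv := Complex.hasSum_taylorSeries_neg_log hv
  have Hsum := Complex.hasSum_re (Hu.add Hv)
  have key : ∀ n : ℕ,
      ((w * Complex.exp (θ * Complex.I)) ^ n / n + (w * Complex.exp (-θ * Complex.I)) ^ n / n).re
        = 2 * (w ^ n).re * Real.cos (n * θ) / n := by
    intro n
    have he : (w * Complex.exp (θ * Complex.I)) ^ n + (w * Complex.exp (-θ * Complex.I)) ^ n
        = w ^ n * (2 * (Real.cos (n * θ) : ℂ)) := by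
      rw [mul_pow, mul_pow, ← Complex.exp_nat_mul, ← Complex.exp_nat_mul]
      rw [Complex.ofReal_cos]
      rw [Complex.cos]
      push_cast
      ring
    have : (w * Complex.exp (θ * Complex.I)) ^ n / n + (w * Complex.exp (-θ * Complex.I)) ^ n / n
        = (w ^ n * (2 * (Real.cos (n * θ) : ℂ))) / ((n : ℝ) : ℂ) := by
      rw [← he]; push_cast; ring
    rw [this, Complex.div_ofReal_re]
    congr 1
    simp only [Complex.mul_re, Complex.mul_im, Complex.ofReal_re, Complex.ofReal_im,
      Complex.re_ofNat, Complex.im_ofNat]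
    ring
  rw [funext key] at Hsum
  convert Hsum using 1
  have hlog := log_decomp hz θ
  rw [Complex.add_re, Complex.neg_re, Complex.neg_re, Complex.log_re, Complex.log_re]
  rw [hlog]
  ring

section orth
open intervalIntegral

lemma int_cos_mul {c : ℝ} (hc : c ≠ 0) :
    ∫ θ in (0:ℝ)..Real.pi, Real.cos (c * θ) = Real.sin (c * Real.pi) / c := by
  rw [intervalIntegral.integral_comp_mul_left Real.cos hc]
  simp [integral_cos, div_eq_inv_mul]

lemma int_cos_int_mul (j : ℤ) (hj : j ≠ 0) :
    ∫ θ in (0:ℝ)..Real.pi, Real.cos ((j : ℝ) * θ) = 0 := by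
  rw [int_cos_mul (by exact_mod_cast hj)]
  rw [Real.sin_int_mul_pi]
  simp

lemma orth_cos (m n : ℕ) (hm : 1 ≤ m) (hn : 1 ≤ n) :
    ∫ θ in (0:ℝ)..Real.pi, Real.cos (m * θ) * Real.cos (n * θ)
      = if m = n then Real.pi / 2 else 0 := by
  have hprod : ∀ θ : ℝ, Real.cos (m * θ) * Real.cos (n * θ)
      = (Real.cos (((m : ℝ) - n) * θ) + Real.cos (((m : ℝ) + n) * θ)) / 2 := by
    intro θ
    have h1 := Real.cos_add ((m:ℝ) * θ) ((n:ℝ) * θ)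
    have h2 := Real.cos_sub ((m:ℝ) * θ) ((n:ℝ) * θ)
    have e1 : ((m : ℝ) - n) * θ = (m:ℝ)*θ - (n:ℝ)*θ := by ring
    have e2 : ((m : ℝ) + n) * θ = (m:ℝ)*θ + (n:ℝ)*θ := by ring
    rw [e1, e2, h1, h2]
    ring
  rw [intervalIntegral.integral_congr (g := fun θ =>
      (Real.cos (((m : ℝ) - n) * θ) + Real.cos (((m : ℝ) + n) * θ)) / 2)
      (fun θ _ => hprod θ)]
  have hcont1 : IntervalIntegrable (fun θ => Real.cos (((m : ℝ) - n) * θ)) volume 0 Real.pi :=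
    (Real.continuous_cos.comp (continuous_const.mul continuous_id)).intervalIntegrable _ _
  have hcont2 : IntervalIntegrable (fun θ => Real.cos (((m : ℝ) + n) * θ)) volume 0 Real.pi :=
    (Real.continuous_cos.comp (continuous_const.mul continuous_id)).intervalIntegrable _ _
  rw [intervalIntegral.integral_div, intervalIntegral.integral_add hcont1 hcont2]
  have hsum : ∫ θ in (0:ℝ)..Real.pi, Real.cos (((m : ℝ) + n) * θ) = 0 := by
    have : ((m : ℝ) + n) = ((m + n : ℤ) : ℝ) := by push_cast; ring
    rw [this, int_cos_int_mul _ (by omega)]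
  by_cases h : m = n
  · subst h
    have : ((m : ℝ) - m) = 0 := by ring
    rw [if_pos rfl, hsum, this]
    simp
  · have : ((m : ℝ) - n) = ((m - n : ℤ) : ℝ) := by push_cast; ring
    rw [if_neg h, hsum, this, int_cos_int_mul _ (by omega)]
    simp

end orth

section keyint
variable {z : ℂ}

lemma sinsin_eq (k : ℕ) (θ : ℝ) :
    Real.sin ((k+1) * θ) * Real.sin θ
      = (Real.cos (k * θ) - Real.cos ((k+2) * θ)) / 2 := by
  have h1 : (k : ℝ) * θ = (k+1)*θ - θ := by ring
  have h2 : ((k : ℝ)+2) * θ = (k+1)*θ + θ := by ring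
  rw [h1, h2, Real.cos_sub, Real.cos_add]
  ring

lemma term_integral (k m : ℕ) (hk : 1 ≤ k) (hm : 1 ≤ m) :
    ∫ θ in (0:ℝ)..Real.pi, Real.cos (m * θ) * (Real.sin ((k+1) * θ) * Real.sin θ)
      = (if m = k then Real.pi/4 else 0) - (if m = k+2 then Real.pi/4 else 0) := by
  have heq : ∀ θ : ℝ, Real.cos (m * θ) * (Real.sin ((k+1) * θ) * Real.sin θ)
      = Real.cos (m * θ) * Real.cos (k * θ) / 2 - Real.cos (m * θ) * Real.cos ((k+2) * θ) / 2 := by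
    intro θ; rw [sinsin_eq]; ring
  rw [intervalIntegral.integral_congr (fun θ _ => heq θ)]
  have c1 : IntervalIntegrable (fun θ => Real.cos (m * θ) * Real.cos (k * θ) / 2)
      volume 0 Real.pi := by
    apply Continuous.intervalIntegrable; continuity
  have c2 : IntervalIntegrable (fun θ => Real.cos (m * θ) * Real.cos ((k+2) * θ) / 2)
      volume 0 Real.pi := by
    apply Continuous.intervalIntegrable; continuity
  rw [intervalIntegral.integral_sub c1 c2, intervalIntegral.integral_div,
    intervalIntegral.integral_div]
  have o1 := orth_cos m k hm hk
  have o2 := orth_cos m (k+2) hm (by omega)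
  have e2 : ((k : ℝ) + 2) = ((k + 2 : ℕ) : ℝ) := by push_cast; ring
  rw [e2, o1, o2]
  split_ifs with h1 h2 h3 <;> first | omega | ring

lemma integral_g_zero (k : ℕ) (hk : 1 ≤ k) :
    ∫ θ in (0:ℝ)..Real.pi, Real.sin ((k+1) * θ) * Real.sin θ = 0 := by
  rw [intervalIntegral.integral_congr (fun θ _ => sinsin_eq k θ)]
  have c1 : IntervalIntegrable (fun θ => Real.cos ((k:ℝ) * θ)) volume 0 Real.pi := by
    apply Continuous.intervalIntegrable; continuity
  have c2 : IntervalIntegrable (fun θ => Real.cos (((k:ℝ)+2) * θ)) volume 0 Real.pi := by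
    apply Continuous.intervalIntegrable; continuity
  rw [intervalIntegral.integral_div, intervalIntegral.integral_sub c1 c2]
  have e1 : ((k : ℝ)) = ((k : ℤ) : ℝ) := by push_cast; ring
  have e2 : ((k : ℝ) + 2) = ((k + 2 : ℤ) : ℝ) := by push_cast; ring
  rw [e2, int_cos_int_mul _ (by omega), e1, int_cos_int_mul _ (by omega)]
  simp

lemma cos_sub_ne (hz : z ∉ Complex.ofReal '' Set.Icc (-1 : ℝ) 1) (θ : ℝ) :
    (Real.cos θ : ℂ) - z ≠ 0 := by
  intro h
  apply hz
  exact ⟨Real.cos θ, ⟨Real.neg_one_le_cos θ, Real.cos_le_one θ⟩, by linear_combination h⟩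

lemma continuous_logabs (hz : z ∉ Complex.ofReal '' Set.Icc (-1 : ℝ) 1) :
    Continuous fun θ : ℝ => Real.log (‖(Real.cos θ : ℂ) - z‖) := by
  apply Continuous.log
  · exact continuous_norm.comp
      ((Complex.continuous_ofReal.comp Real.continuous_cos).sub continuous_const)
  · exact fun θ => norm_ne_zero_iff.mpr (cos_sub_ne hz θ)

lemma key_integral (k : ℕ) (hk : 1 ≤ k) (hz : z ∉ Complex.ofReal '' Set.Icc (-1 : ℝ) 1) :
    ∫ θ in (0:ℝ)..Real.pi,
        Real.log (‖(Real.cos θ : ℂ) - z‖) * (Real.sin ((k+1) * θ) * Real.sin θ)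
      = Real.pi/2 * (((Jinv z)^(k+2)).re/(k+2) - ((Jinv z)^k).re/k) := by
  set w := Jinv z with hw
  set r := ‖w‖ with hr
  have hr0 : 0 ≤ r := norm_nonneg w
  have hr1 : r < 1 := abs_Jinv_lt_one hz
  set g : ℝ → ℝ := fun θ => Real.sin ((k+1) * θ) * Real.sin θ with hg
  set F : ℕ → ℝ → ℝ := fun m θ => (2 * (w ^ m).re * Real.cos (m * θ) / m) * g θ with hF
  set L : ℝ → ℝ := fun θ =>
    -(Real.log (‖(Real.cos θ : ℂ) - z‖) + Real.log (2 * r)) with hL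
  have habsg : ∀ θ, |g θ| ≤ 1 := by
    intro θ
    rw [hg, abs_mul]
    have h1 := abs_sin_le_one ((k+1 : ℝ) * θ)
    have h2 := abs_sin_le_one θ
    nlinarith [abs_nonneg (Real.sin (((k:ℝ)+1)*θ)), abs_nonneg (Real.sin θ)]
  have hbound : ∀ m : ℕ, ∀ θ : ℝ, |F m θ| ≤ 2 * r ^ m := by
    intro m θ
    rcases Nat.eq_zero_or_pos m with rfl | hm
    · simp [hF]
    have hre : |(w ^ m).re| ≤ r ^ m := by
      rw [hr, ← norm_pow]
      exact Complex.abs_re_le_norm _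
    have hcos := Real.abs_cos_le_one ((m:ℝ) * θ)
    have h1 : |2 * (w ^ m).re * Real.cos ((m:ℝ) * θ)| ≤ 2 * r ^ m := by
      rw [abs_mul, abs_mul, (show |(2:ℝ)| = 2 by norm_num)]
      nlinarith [mul_le_mul hre hcos (abs_nonneg _) (pow_nonneg hr0 m)]
    have hm1 : (1:ℝ) ≤ |(m:ℝ)| := by
      rw [_root_.abs_of_nonneg (show (0:ℝ) ≤ (m:ℝ) from Nat.cast_nonneg m)]
      exact_mod_cast hm
    have hdiv : |2 * (w ^ m).re * Real.cos ((m:ℝ) * θ)| / |(m:ℝ)|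
        ≤ |2 * (w ^ m).re * Real.cos ((m:ℝ) * θ)| := by
      calc |2 * (w ^ m).re * Real.cos ((m:ℝ) * θ)| / |(m:ℝ)|
          ≤ |2 * (w ^ m).re * Real.cos ((m:ℝ) * θ)| / 1 :=
            div_le_div_of_nonneg_left (abs_nonneg _) one_pos hm1
        _ = _ := div_one _
    have : |F m θ| = |2 * (w ^ m).re * Real.cos ((m:ℝ) * θ)| / |(m:ℝ)| * |g θ| := by
      rw [hF]; simp only; rw [abs_mul, abs_div]
    rw [this]
    calc |2 * (w ^ m).re * Real.cos ((m:ℝ) * θ)| / |(m:ℝ)| * |g θ|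
        ≤ |2 * (w ^ m).re * Real.cos ((m:ℝ) * θ)| * 1 :=
          mul_le_mul hdiv (habsg θ) (abs_nonneg _) (abs_nonneg _)
      _ ≤ 2 * r ^ m := by rw [mul_one]; exact h1
  have hFcont : ∀ m : ℕ, Continuous (F m) := by
    intro m
    apply Continuous.mul
    · apply Continuous.div_const
      exact (continuous_const.mul ((Real.continuous_cos.comp (continuous_const.mul continuous_id))))
    · exact (Real.continuous_sin.comp (continuous_const.mul continuous_id)).mul Real.continuous_sin
  have hsummable : Summable fun m : ℕ => 2 * r ^ m :=
    (summable_geometric_of_lt_one hr0 hr1).mul_left 2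
  have Hs : HasSum (fun m => ∫ θ in (0:ℝ)..Real.pi, F m θ)
      (∫ θ in (0:ℝ)..Real.pi, L θ * g θ) := by
    apply intervalIntegral.hasSum_integral_of_dominated_convergence
      (bound := fun m _ => 2 * r ^ m)
    · exact fun m => ((hFcont m).aestronglyMeasurable)
    · exact fun m => Filter.Eventually.of_forall fun θ _ => by
        rw [Real.norm_eq_abs]; exact hbound m θ
    · exact Filter.Eventually.of_forall fun θ _ => hsummable
    · exact intervalIntegrable_const
    · exact Filter.Eventually.of_forall fun θ _ => by
        have := (pointwise_hasSum hz θ).mul_right (g θ)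
        exact this
  have hFval : ∀ m : ℕ, (∫ θ in (0:ℝ)..Real.pi, F m θ)
      = (if m = k then Real.pi/2 * (w^k).re/k else 0)
        + (if m = k+2 then -(Real.pi/2 * (w^(k+2)).re/(k+2)) else 0) := by
    intro m
    rcases Nat.eq_zero_or_pos m with rfl | hm
    · have : ∀ θ, F 0 θ = 0 := by intro θ; rw [hF]; simp
      rw [intervalIntegral.integral_congr (fun θ _ => this θ)]
      simp only [intervalIntegral.integral_zero]
      rw [if_neg (by omega), if_neg (by omega)]
      ring
    have heq : ∀ θ, F m θ = (2 * (w ^ m).re / m) * (Real.cos (m * θ) * g θ) := by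
      intro θ; rw [hF]; ring
    rw [intervalIntegral.integral_congr (fun θ _ => heq θ),
      intervalIntegral.integral_const_mul, term_integral k m hk hm]
    have hkne : (k:ℝ) ≠ 0 := by exact_mod_cast (by omega : k ≠ 0)
    have hk2ne : (k:ℝ) + 2 ≠ 0 := by positivity
    by_cases h1 : m = k
    · subst h1
      rw [if_pos rfl, if_pos rfl, if_neg (by omega : ¬ (m = m + 2)), if_neg (by omega)]
      field_simp
      ring
    · by_cases h2 : m = k + 2
      · subst h2
        rw [if_neg h1, if_neg h1, if_pos rfl, if_pos rfl]
        push_cast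
        field_simp
        ring
      · rw [if_neg h1, if_neg h1, if_neg h2, if_neg h2]
        ring
  rw [funext hFval] at Hs
  have Htarget : HasSum (fun m : ℕ =>
      (if m = k then Real.pi/2 * (w^k).re/k else 0)
        + (if m = k+2 then -(Real.pi/2 * (w^(k+2)).re/(k+2)) else 0))
      (Real.pi/2 * (w^k).re/k + -(Real.pi/2 * (w^(k+2)).re/(k+2))) :=
    (hasSum_ite_eq k _).add (hasSum_ite_eq (k+2) _)
  have hLg : (∫ θ in (0:ℝ)..Real.pi, L θ * g θ)
      = Real.pi/2 * (w^k).re/k + -(Real.pi/2 * (w^(k+2)).re/(k+2)) :=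
    Hs.unique Htarget
  -- expand L
  have hgc : Continuous g :=
    (Real.continuous_sin.comp (continuous_const.mul continuous_id)).mul Real.continuous_sin
  have hintlog : IntervalIntegrable
      (fun θ => Real.log (‖(Real.cos θ : ℂ) - z‖) * g θ) volume 0 Real.pi :=
    ((continuous_logabs hz).mul hgc).intervalIntegrable _ _
  have hintc : IntervalIntegrable (fun θ => Real.log (2 * r) * g θ) volume 0 Real.pi :=
    (continuous_const.mul hgc).intervalIntegrable _ _
  have hexp : ∀ θ, L θ * g θ
      = -(Real.log (‖(Real.cos θ : ℂ) - z‖) * g θ + Real.log (2 * r) * g θ) := by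
    intro θ; rw [hL]; ring
  rw [intervalIntegral.integral_congr (fun θ _ => hexp θ), intervalIntegral.integral_neg,
    intervalIntegral.integral_add hintlog hintc,
    intervalIntegral.integral_const_mul, integral_g_zero k hk] at hLg
  have : -(∫ θ in (0:ℝ)..Real.pi, Real.log (‖(Real.cos θ : ℂ) - z‖) * g θ)
      = Real.pi/2 * (w^k).re/k + -(Real.pi/2 * (w^(k+2)).re/(k+2)) := by
    simpa using hLg
  have := congrArg Neg.neg this
  simp only [neg_neg] at this
  rw [this]
  ring

end keyint

section final
variable {z : ℂ}

lemma subst_integral (k : ℕ) (hz : z ∉ Complex.ofReal '' Set.Icc (-1 : ℝ) 1) :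
    (∫ t in (-1:ℝ)..1, Real.log (‖(t : ℂ) - z‖)
        * ((Polynomial.Chebyshev.U ℝ k).eval t * Real.sqrt (1 - t ^ 2)))
      = ∫ θ in (0:ℝ)..Real.pi,
          Real.log (‖(Real.cos θ : ℂ) - z‖) * (Real.sin ((k+1) * θ) * Real.sin θ) := by
  set G : ℝ → ℝ := fun t => Real.log (‖(t : ℂ) - z‖)
      * ((Polynomial.Chebyshev.U ℝ k).eval t * Real.sqrt (1 - t ^ 2)) with hG
  have himg : Real.cos '' (Set.uIcc 0 Real.pi) ⊆ Set.Icc (-1 : ℝ) 1 := by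
    rintro t ⟨θ, _, rfl⟩
    exact ⟨Real.neg_one_le_cos θ, Real.cos_le_one θ⟩
  have hne : ∀ t ∈ Set.Icc (-1:ℝ) 1, ‖(t : ℂ) - z‖ ≠ 0 := by
    intro t ht
    refine norm_ne_zero_iff.mpr ?_
    intro h
    exact hz ⟨t, ht, by linear_combination h⟩
  have hGcont : ContinuousOn G (Set.Icc (-1:ℝ) 1) := by
    apply ContinuousOn.mul
    · apply ContinuousOn.log
      · exact (continuous_norm.comp
          ((Complex.continuous_ofReal.sub continuous_const))).continuousOn
      · exact hne
    · apply ContinuousOn.mul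
      · exact ((Polynomial.Chebyshev.U ℝ k).continuous_aeval).continuousOn
      · exact (Real.continuous_sqrt.comp
          (continuous_const.sub (continuous_pow 2))).continuousOn
  have hsub := intervalIntegral.integral_comp_smul_deriv''
    (a := 0) (b := Real.pi) (f := Real.cos) (f' := fun θ => -Real.sin θ) (g := G)
    Real.continuous_cos.continuousOn
    (fun x _ => (Real.hasDerivAt_cos x).hasDerivWithinAt)
    Real.continuous_sin.neg.continuousOn
    (hGcont.mono himg)
  rw [Real.cos_zero, Real.cos_pi] at hsub
  have hL : ∀ θ ∈ Set.uIcc (0:ℝ) Real.pi,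
      (-Real.sin θ) • (G ∘ Real.cos) θ
        = -(Real.log (‖(Real.cos θ : ℂ) - z‖)
            * (Real.sin ((k+1) * θ) * Real.sin θ)) := by
    intro θ hθ
    have hθ' : θ ∈ Set.Icc (0:ℝ) Real.pi := by
      rwa [Set.uIcc_of_le Real.pi_pos.le] at hθ
    have hsin : 0 ≤ Real.sin θ := Real.sin_nonneg_of_nonneg_of_le_pi hθ'.1 hθ'.2
    have hsqrt : Real.sqrt (1 - Real.cos θ ^ 2) = Real.sin θ := by
      rw [show (1 : ℝ) - Real.cos θ ^ 2 = Real.sin θ ^ 2 by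
        have := Real.sin_sq_add_cos_sq θ; linarith]
      rw [Real.sqrt_sq_eq_abs, _root_.abs_of_nonneg hsin]
    have hU : (Polynomial.Chebyshev.U ℝ k).eval (Real.cos θ) * Real.sin θ
        = Real.sin ((k+1) * θ) := by
      have := Polynomial.Chebyshev.U_real_cos θ (k : ℤ)
      push_cast at this ⊢
      convert this using 3
    simp only [Function.comp, hG, smul_eq_mul, hsqrt]
    rw [show Real.log (‖(Real.cos θ : ℂ) - z‖)
        * ((Polynomial.Chebyshev.U ℝ k).eval (Real.cos θ) * Real.sin θ)
        = Real.log (‖(Real.cos θ : ℂ) - z‖) * Real.sin ((k+1)*θ) by rw [hU]]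
    ring
  rw [intervalIntegral.integral_congr hL] at hsub
  have h1 : (∫ θ in (0:ℝ)..Real.pi,
      -(Real.log (‖(Real.cos θ : ℂ) - z‖) * (Real.sin ((k+1) * θ) * Real.sin θ)))
      = -∫ θ in (0:ℝ)..Real.pi,
          Real.log (‖(Real.cos θ : ℂ) - z‖) * (Real.sin ((k+1) * θ) * Real.sin θ) :=
    intervalIntegral.integral_neg
  have h2 : (∫ u in (1:ℝ)..(-1:ℝ), G u) = -∫ u in (-1:ℝ)..1, G u :=
    intervalIntegral.integral_symm _ _
  rw [h1, h2] at hsub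
  linarith [hsub]

end final

/-- Log transform of `U_k(t)·√(1-t²)`:
`ℒ[U_k √(1-t²)](z) = ½ Re(J₊⁻¹(z)^{k+2}/(k+2) - J₊⁻¹(z)^{k}/k)` for `k ≥ 1`,
`z ∈ ℂ∖[-1,1]`. -/
theorem log_transform_weighted_chebyshevU_complex (k : ℕ) (hk : 1 ≤ k) (z : ℂ)
    (hz : z ∉ Complex.ofReal '' Set.Icc (-1 : ℝ) 1) :
    ((1 / Real.pi) *
        ∫ t in (-1 : ℝ)..1,
          Real.log (‖(t : ℂ) - z‖)
            * ((Polynomial.Chebyshev.U ℝ k).eval t * Real.sqrt (1 - t ^ 2)))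
      = (1 / 2) * ((Jinv z) ^ (k + 2) / (k + 2) - (Jinv z) ^ k / k).re := by
  rw [subst_integral k hz, key_integral k hk hz]
  have hre : ((Jinv z) ^ (k + 2) / ((k : ℂ) + 2) - (Jinv z) ^ k / (k : ℂ)).re
      = ((Jinv z)^(k+2)).re/((k:ℝ)+2) - ((Jinv z)^k).re/(k:ℝ) := by
    rw [Complex.sub_re]
    congr 1
    · rw [show ((k : ℂ) + 2) = (((k : ℝ) + 2 : ℝ) : ℂ) by push_cast; ring,
        Complex.div_ofReal_re]
    · rw [show ((k : ℂ)) = (((k : ℝ) : ℝ) : ℂ) by push_cast; ring, Complex.div_ofReal_re]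
  rw [hre]
  have hpi : Real.pi ≠ 0 := Real.pi_ne_zero
  push_cast
  field_simp
  try ring
end series
end

section
/- For every z ∈ ℂ∖[−1,1], the value w = J₊⁻¹(z) satisfies w² − 2zw + 1 = 0 (equivalently (w + w⁻¹)/2 = z, with w ≠ 0) and |w| < 1; that is, J₊⁻¹ maps the slit plane ℂ∖[−1,1] into the open unit disk and is a right inverse of the Joukowsky transform J(w) = (w + w⁻¹)/2. -/
open Filter Set

/-- Principal square root lies in the closed right half-plane, with boundary on
the nonnegative imaginary axis. -/

lemma sqrt_half_plane (w : ℂ) :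
    0 ≤ (w ^ ((1:ℂ)/2)).re ∧ ((w ^ ((1:ℂ)/2)).re = 0 → 0 ≤ (w ^ ((1:ℂ)/2)).im) := by
  rcases eq_or_ne w 0 with rfl | hw
  · rw [Complex.zero_cpow (by norm_num)]
    simp
  · rw [Complex.cpow_def_of_ne_zero hw]
    have him : (Complex.log w * (1/2)).im = Complex.arg w / 2 := by
      simp [Complex.mul_im, Complex.log_im, Complex.log_re]
      ring
    have harg1 := Complex.arg_le_pi w
    have harg2 := Complex.neg_pi_lt_arg w
    have hpi := Real.pi_pos
    have hcos : 0 ≤ Real.cos (Complex.arg w / 2) := by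
      apply Real.cos_nonneg_of_mem_Icc
      constructor <;> · linarith
    constructor
    · rw [Complex.exp_re, him]
      positivity
    · intro hre
      rw [Complex.exp_re, him] at hre
      have hexp : (0:ℝ) < Real.exp (Complex.log w * (1/2)).re := Real.exp_pos _
      have hcos0 : Real.cos (Complex.arg w / 2) = 0 := by
        rcases mul_eq_zero.1 hre with h | h
        · exact absurd h (ne_of_gt hexp)
        · exact h
      rw [Complex.exp_im, him]
      have : ¬ (Complex.arg w / 2 < Real.pi / 2) := by
        intro hlt
        have := Real.cos_pos_of_mem_Ioo (show Complex.arg w / 2 ∈ Set.Ioo (-(Real.pi/2)) (Real.pi/2) from ⟨by linarith, hlt⟩)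
        linarith
      have heq : Complex.arg w / 2 = Real.pi / 2 := le_antisymm (by linarith) (not_lt.1 this)
      rw [heq, Real.sin_pi_div_two]
      positivity

lemma real_ineq (p q r s : ℝ) (hp : 0 ≤ p) (hr : 0 ≤ r) (hq : p = 0 → 0 ≤ q)
    (hs : r = 0 → 0 ≤ s) (h : r * s = p * q) : 0 ≤ p * r + q * s := by
  rcases le_or_gt 0 (q * s) with h1 | h1
  · nlinarith [mul_nonneg hp hr]
  rcases lt_trichotomy q 0 with h2 | h2 | h2
  · have hp0 : 0 < p := lt_of_le_of_ne hp (fun he => absurd (hq he.symm) (not_le.2 h2))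
    have hs0 : 0 < s := by
      by_contra hc
      push_neg at hc
      nlinarith [mul_nonneg (neg_nonneg.2 h2.le) (neg_nonneg.2 hc)]
    nlinarith [mul_nonneg hr hs0.le, mul_pos hp0 (neg_pos.2 h2)]
  · rw [h2, zero_mul] at h1
    exact absurd h1 (lt_irrefl 0)
  · have hs0 : s < 0 := by
      by_contra hc
      push_neg at hc
      nlinarith [mul_nonneg h2.le hc]
    have hr0 : 0 < r := lt_of_le_of_ne hr (fun he => absurd (hs he.symm) (not_le.2 hs0))
    nlinarith [mul_nonneg hp h2.le, mul_pos hr0 (neg_pos.2 hs0)]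

/-- On the slit plane `ℂ∖[-1,1]`, `w = J₊⁻¹(z)` is a nonzero point of the
open unit disk satisfying `w² - 2zw + 1 = 0`, equivalently `(w + w⁻¹)/2 = z`; thus `J₊⁻¹`
is a right inverse of the Joukowsky transform `J(w) = (w + w⁻¹)/2` mapping into the
unit disk. -/
theorem Jinv_maps_slit_plane_to_disk (z : ℂ)
    (hz : z ∉ Complex.ofReal '' Set.Icc (-1 : ℝ) 1) :
    Jinv z ≠ 0 ∧
    (Jinv z) ^ 2 - 2 * z * Jinv z + 1 = 0 ∧
    (Jinv z + (Jinv z)⁻¹) / 2 = z ∧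
    ‖Jinv z‖ < 1 := by
  set a := (z - 1) ^ ((1:ℂ)/2) with ha
  set b := (z + 1) ^ ((1:ℂ)/2) with hb
  have h12 : (1:ℂ)/2 = ((2:ℕ):ℂ)⁻¹ := by norm_num
  have ha2 : a ^ 2 = z - 1 := by
    rw [ha, h12]; exact Complex.cpow_nat_inv_pow _ two_ne_zero
  have hb2 : b ^ 2 = z + 1 := by
    rw [hb, h12]; exact Complex.cpow_nat_inv_pow _ two_ne_zero
  have hJ : Jinv z = z - a * b := rfl
  -- product of the two roots is 1
  have hprod : Jinv z * (z + a * b) = 1 := by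
    rw [hJ]; linear_combination (-(b^2)) * ha2 - (z - 1) * hb2
  have hw0 : Jinv z ≠ 0 := by
    intro h; rw [h, zero_mul] at hprod; exact zero_ne_one hprod
  have hquad : (Jinv z) ^ 2 - 2 * z * Jinv z + 1 = 0 := by
    rw [hJ]; linear_combination b^2 * ha2 + (z - 1) * hb2
  have hinv : (Jinv z + (Jinv z)⁻¹) / 2 = z := by
    field_simp
    linear_combination hquad
  -- now the modulus bound
  have hdiff : (b ^ 2 - a ^ 2) = 2 := by linear_combination hb2 - ha2
  have him : b.re * b.im = a.re * a.im := by
    have := congrArg Complex.im hdiff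
    simp [pow_two, Complex.sub_im, Complex.mul_im] at this
    linarith
  obtain ⟨hare, haim⟩ := sqrt_half_plane (z - 1)
  obtain ⟨hbre, hbim⟩ := sqrt_half_plane (z + 1)
  rw [← ha] at hare haim
  rw [← hb] at hbre hbim
  have hRe : 0 ≤ a.re * b.re + a.im * b.im := by
    have := real_ineq a.re a.im b.re b.im hare hbre haim hbim (by linarith)
    linarith
  -- (b-a)^2 = 2 * Jinv z, (b+a)^2 = 2 * (z + a*b)
  have hsm : (b - a) ^ 2 = 2 * Jinv z := by rw [hJ]; linear_combination ha2 + hb2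
  have hlg : (b + a) ^ 2 = 2 * (z + a * b) := by linear_combination ha2 + hb2
  have hsq : ‖b - a‖ ^ 2 ≤ ‖b + a‖ ^ 2 := by
    rw [Complex.sq_norm, Complex.sq_norm, Complex.normSq_apply, Complex.normSq_apply]
    simp only [Complex.sub_re, Complex.sub_im, Complex.add_re, Complex.add_im]
    nlinarith
  have hle : ‖Jinv z‖ ≤ 1 := by
    have h4 : ‖b - a‖ ^ 2 * ‖b + a‖ ^ 2 = 4 := by
      have : ((b - a) ^ 2) * ((b + a) ^ 2) = 4 * (Jinv z * (z + a * b)) := by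
        rw [hsm, hlg]; ring
      have habs := congrArg (norm : ℂ → ℝ) this
      rw [norm_mul, norm_pow, norm_pow] at habs
      rw [habs, hprod, norm_mul]
      simp
    have hA := norm_nonneg (b - a)
    have hB := norm_nonneg (b + a)
    have h2 : ‖Jinv z‖ = ‖b - a‖ ^ 2 / 2 := by
      have := congrArg (norm : ℂ → ℝ) hsm
      rw [norm_pow, norm_mul] at this
      simp at this
      linarith [this]
    rw [h2]
    nlinarith [sq_nonneg ‖b-a‖, sq_nonneg ‖b+a‖]
  have hne : ‖Jinv z‖ ≠ 1 := by
    intro habs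
    set w := Jinv z with hwdef
    have hcon : w * (starRingEnd ℂ) w = 1 := by
      rw [Complex.mul_conj]
      norm_cast
      rw [← Complex.sq_norm, habs]; norm_num
    have hwinv : w⁻¹ = (starRingEnd ℂ) w := inv_eq_of_mul_eq_one_right hcon
    have hzre : z = (w.re : ℂ) := by
      rw [← hinv, hwinv, Complex.add_conj]
      push_cast; ring
    apply hz
    refine ⟨w.re, ⟨?_, ?_⟩, hzre.symm⟩
    · have := Complex.abs_re_le_norm w; rw [habs] at this
      cases abs_le.1 this; assumption
    · have := Complex.abs_re_le_norm w; rw [habs] at this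
      exact (abs_le.1 this).2
  exact ⟨hw0, hquad, hinv, lt_of_le_of_ne hle hne⟩
end

section
/- The function z ↦ z·J₊⁻¹(z) tends to 1/2 as |z| → ∞; that is, for every ε > 0 there exists R > 0 such that |z·J₊⁻¹(z) − 1/2| < ε whenever |z| > R. -/
open Filter Set

lemma cpow_half_sq (w : ℂ) : (w ^ ((1:ℂ)/2)) ^ 2 = w := by
  have := Complex.cpow_nat_inv_pow w (n := 2) (by norm_num)
  convert this using 2 <;> norm_num

lemma re_cpow_half_nonneg (w : ℂ) : 0 ≤ (w ^ ((1:ℂ)/2)).re := by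
  rcases eq_or_ne w 0 with h | h
  · simp [h, Complex.zero_cpow (by norm_num : (1:ℂ)/2 ≠ 0)]
  · rw [Complex.cpow_def_of_ne_zero h, Complex.exp_re]
    have him : (Complex.log w * (1/2)).im = w.arg / 2 := by
      simp [Complex.mul_im, Complex.log_im]
      ring
    rw [him]
    apply mul_nonneg (Real.exp_nonneg _)
    apply Real.cos_nonneg_of_mem_Icc
    constructor
    · have := Complex.neg_pi_lt_arg w; linarith
    · have := Complex.arg_le_pi w; linarith

lemma im_cpow_half_nonneg_of_re_eq_zero (w : ℂ) (h0 : (w ^ ((1:ℂ)/2)).re = 0) :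
    0 ≤ (w ^ ((1:ℂ)/2)).im := by
  rcases eq_or_ne w 0 with h | h
  · simp [h, Complex.zero_cpow (by norm_num : (1:ℂ)/2 ≠ 0)]
  · rw [Complex.cpow_def_of_ne_zero h] at h0 ⊢
    rw [Complex.exp_re] at h0
    rw [Complex.exp_im]
    have him : (Complex.log w * (1/2)).im = w.arg / 2 := by
      simp [Complex.mul_im, Complex.log_im]; ring
    rw [him] at h0 ⊢
    have hexp : 0 < Real.exp (Complex.log w * (1/2)).re := Real.exp_pos _
    have hcos : Real.cos (w.arg / 2) = 0 := by
      rcases mul_eq_zero.1 h0 with h' | h'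
      · exact absurd h' (ne_of_gt hexp)
      · exact h'
    have h1 : -Real.pi < w.arg := Complex.neg_pi_lt_arg w
    have h2 : w.arg ≤ Real.pi := Complex.arg_le_pi w
    have harg : w.arg / 2 = Real.pi / 2 := by
      rcases Real.cos_eq_zero_iff.1 hcos with ⟨n, hn⟩
      have hpi := Real.pi_pos
      have e1 : (-1:ℝ) < 2*(n:ℝ)+1 := by nlinarith
      have e2 : 2*(n:ℝ)+1 ≤ 1 := by nlinarith
      have p1 : (-1:ℤ) < n := by exact_mod_cast (by linarith : (-1:ℝ) < (n:ℝ))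
      have p2 : n ≤ 0 := by exact_mod_cast (by linarith : (n:ℝ) ≤ (0:ℝ))
      have hn0 : n = 0 := by omega
      rw [hn0] at hn
      push_cast at hn
      linarith
    rw [harg, Real.sin_pi_div_two]
    positivity

lemma key_ineq {a b c d : ℝ} (ha : 0 ≤ a) (hc : 0 ≤ c) (hab : a * b = c * d)
    (ha0 : a = 0 → 0 ≤ b) (hc0 : c = 0 → 0 ≤ d) : 0 ≤ a * c + b * d := by
  rcases eq_or_lt_of_le ha with ha' | ha'
  · have hb := ha0 ha'.symm
    rcases eq_or_lt_of_le hc with hc' | hc'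
    · have hd := hc0 hc'.symm
      nlinarith
    · have hd0 : d = 0 := by
        have h : c * d = 0 := by rw [← hab, ← ha']; ring
        rcases mul_eq_zero.1 h with h | h
        · exact absurd h hc'.ne'
        · exact h
      nlinarith
  · rcases eq_or_lt_of_le hc with hc' | hc'
    · have hd := hc0 hc'.symm
      have hb0 : b = 0 := by
        have h : a * b = 0 := by rw [hab, ← hc']; ring
        rcases mul_eq_zero.1 h with h | h
        · exact absurd h ha'.ne'
        · exact h
      nlinarith
    · have hbd : 0 ≤ b * d := by
        by_contra hneg
        push_neg at hneg
        have h1 : (a*c)*(b*d) = (c*d)^2 := by linear_combination (c*d) * hab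
        nlinarith [mul_pos ha' hc', sq_nonneg (c*d)]
      nlinarith

/-- `z·J₊⁻¹(z) → 1/2` as `|z| → ∞`. -/
theorem Jinv_asymptotics :
    ∀ ε : ℝ, 0 < ε → ∃ R : ℝ, 0 < R ∧ ∀ z : ℂ, R < ‖z‖ →
      ‖z * Jinv z - 1 / 2‖ < ε := by
  intro ε hε
  have hsε : 0 < Real.sqrt ε := Real.sqrt_pos.2 hε
  refine ⟨1 / Real.sqrt ε + 1, by positivity, ?_⟩
  intro z hz
  set w : ℂ := (z - 1) ^ ((1:ℂ)/2) with hw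
  set v : ℂ := (z + 1) ^ ((1:ℂ)/2) with hv
  set s : ℂ := w * v with hs
  have hw2 : w ^ 2 = z - 1 := by rw [hw]; exact cpow_half_sq _
  have hv2 : v ^ 2 = z + 1 := by rw [hv]; exact cpow_half_sq _
  have key : (z - s) * (z + s) = 1 := by
    have hs2 : s ^ 2 = (z - 1) * (z + 1) := by rw [hs, mul_pow, hw2, hv2]
    linear_combination -hs2
  -- real/imaginary parts
  set a : ℝ := w.re
  set b : ℝ := w.im
  set c : ℝ := v.re
  set d : ℝ := v.im
  have ha : 0 ≤ a := re_cpow_half_nonneg _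
  have hc : 0 ≤ c := re_cpow_half_nonneg _
  have ha0 : a = 0 → 0 ≤ b := im_cpow_half_nonneg_of_re_eq_zero _
  have hc0 : c = 0 → 0 ≤ d := im_cpow_half_nonneg_of_re_eq_zero _
  have hwim : 2 * (a * b) = z.im := by
    have := congrArg Complex.im hw2
    simp [pow_two, Complex.mul_im] at this
    linarith
  have hvim : 2 * (c * d) = z.im := by
    have := congrArg Complex.im hv2
    simp [pow_two, Complex.mul_im] at this
    linarith
  have hab : a * b = c * d := by linarith
  have hacbd : 0 ≤ a * c + b * d := key_ineq ha hc hab ha0 hc0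
  have hwre : 2 * z.re = a^2 - b^2 + c^2 - d^2 := by
    have h1 := congrArg Complex.re hw2
    have h2 := congrArg Complex.re hv2
    simp [pow_two, Complex.mul_re] at h1 h2
    nlinarith [h1, h2]
  have hsre : s.re = a * c - b * d := by rw [hs, Complex.mul_re]
  have hsim : s.im = a * d + b * c := by rw [hs, Complex.mul_im]
  have hzim : z.im = a * b + c * d := by linarith
  have hre : 0 ≤ z.re * s.re + z.im * s.im := by
    have hid : 2 * (z.re * s.re + z.im * s.im)
        = (a^2 + b^2 + c^2 + d^2) * (a * c + b * d) := by
      rw [hsre, hsim]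
      linear_combination (a*c - b*d) * hwre + (2*(a*d + b*c)) * hzim
    nlinarith [mul_nonneg (by positivity : (0:ℝ) ≤ a^2 + b^2 + c^2 + d^2) hacbd]
  -- |z| ≤ |z + s|
  have habs : ‖z‖ ≤ ‖z + s‖ := by
    rw [Complex.norm_def, Complex.norm_def]
    apply Real.sqrt_le_sqrt
    simp only [Complex.normSq_apply, Complex.add_re, Complex.add_im]
    nlinarith [sq_nonneg s.re, sq_nonneg s.im]
  have hmain : z * Jinv z - 1 / 2 = (z - s)^2 / 2 := by
    unfold Jinv
    rw [← hw, ← hv, ← hs]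
    linear_combination key / 2
  rw [hmain]
  have hCB : ‖z - s‖ * ‖z + s‖ = 1 := by
    rw [← norm_mul, key, norm_one]
  have habs2 : ‖(z - s)^2 / 2‖ = ‖z - s‖^2 / 2 := by
    rw [norm_div, norm_pow, Complex.norm_two]
  rw [habs2]
  set A := ‖z‖ with hAdef
  set B := ‖z + s‖ with hBdef
  set C := ‖z - s‖ with hCdef
  have hC0 : 0 ≤ C := hCdef ▸ norm_nonneg _
  clear_value A B C
  clear hAdef hBdef hCdef hmain key hw2 hv2 hwim hvim hab hacbd hwre hsre hsim hzim hre ha hc ha0 hc0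
  clear_value a b c d w v s
  clear habs2 a b c d hw hv hs w v s z
  have hA : 1 / Real.sqrt ε < A := by linarith
  have hA0 : 0 < A := lt_trans (by positivity) hA
  have hCA : C * A ≤ 1 := by
    calc C * A ≤ C * B := by apply mul_le_mul_of_nonneg_left habs hC0
    _ = 1 := hCB
  have h1 : 1 / Real.sqrt ε * Real.sqrt ε = 1 := by field_simp
  have hA1 : 1 < A * Real.sqrt ε := by
    have h := mul_lt_mul_of_pos_right hA hsε
    rwa [h1] at h
  have h5 : A^2 * ε = (A * Real.sqrt ε)^2 := by
    rw [mul_pow, Real.sq_sqrt hε.le]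
  have hAε : 1 < A^2 * ε := by nlinarith [hA1, h5]
  have h3 : C^2 ≤ C^2 * (A^2 * ε) := by nlinarith [sq_nonneg C]
  have h6 : C*A*(C*A) ≤ 1 := by
    nlinarith [mul_le_mul hCA hCA (mul_nonneg hC0 hA0.le) zero_le_one]
  have h4 : C^2 * (A^2 * ε) ≤ ε := by nlinarith [h6, hε.le]
  linarith
end

section
/- On the domain Ω = ℂ∖(−∞,1], writing J(z) = J₊⁻¹(z) (so that J(z) avoids the nonpositive real axis for z ∈ Ω), the following derivative identities hold for every z ∈ Ω: (i) the derivative of z ↦ −Log(J(z)) equals 1/((z−1)^{1/2}·(z+1)^{1/2}), where Log is the principal branch of the complex logarithm; (ii) the derivative of z ↦ J(z)²/4 − (1/2)·Log(J(z)) equals J(z); and (iii) for every integer k ≥ 2, the derivative of z ↦ (1/2)·( J(z)^{k+1}/(k+1) − J(z)^{k−1}/(k−1) ) equals J(z)^k. -/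
open Filter Set

/-- Antiderivative identities for powers of `J = J₊⁻¹` on the domain
`Ω = ℂ∖(-∞,1]`:
(i) `d/dz (-Log J(z)) = 1/((z-1)^{1/2}(z+1)^{1/2})`,
(ii) `d/dz (J(z)²/4 - ½ Log J(z)) = J(z)`,
(iii) `d/dz (½ (J(z)^{k+1}/(k+1) - J(z)^{k-1}/(k-1))) = J(z)^k` for `k ≥ 2`. -/
theorem Jinv_antiderivatives (z : ℂ) (hz : z ∉ {w : ℂ | w.im = 0 ∧ w.re ≤ 1}) :
    HasDerivAt (fun w : ℂ => -Complex.log (Jinv w))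
      (1 / ((z - 1) ^ ((1 : ℂ) / 2) * (z + 1) ^ ((1 : ℂ) / 2))) z ∧
    HasDerivAt (fun w : ℂ => (Jinv w) ^ 2 / 4 - (1 / 2) * Complex.log (Jinv w))
      (Jinv z) z ∧
    ∀ k : ℕ, 2 ≤ k →
      HasDerivAt (fun w : ℂ =>
          (1 / 2) * ((Jinv w) ^ (k + 1) / ((k : ℂ) + 1) - (Jinv w) ^ (k - 1) / ((k : ℂ) - 1)))
        ((Jinv z) ^ k) z := by
  simp only [Set.mem_setOf_eq, not_and, not_le] at hz
  set a : ℂ := (z - 1) ^ ((1 : ℂ) / 2) with ha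
  set b : ℂ := (z + 1) ^ ((1 : ℂ) / 2) with hb
  have h1 : z - 1 ∈ Complex.slitPlane := by
    rw [Complex.mem_slitPlane_iff]
    rcases eq_or_ne z.im 0 with h | h
    · left; have := hz h; simp only [Complex.sub_re, Complex.one_re]; linarith
    · right; simpa using h
  have h2 : z + 1 ∈ Complex.slitPlane := by
    rw [Complex.mem_slitPlane_iff]
    rcases eq_or_ne z.im 0 with h | h
    · left; have := hz h; simp only [Complex.add_re, Complex.one_re]; linarith
    · right; simpa using h
  have hz1 : z - 1 ≠ 0 := Complex.slitPlane_ne_zero h1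
  have hz2 : z + 1 ≠ 0 := Complex.slitPlane_ne_zero h2
  have ha0 : a ≠ 0 := by
    rw [ha, Ne, Complex.cpow_eq_zero_iff]; tauto
  have hb0 : b ≠ 0 := by
    rw [hb, Ne, Complex.cpow_eq_zero_iff]; tauto
  have haa : a * a = z - 1 := by
    rw [ha, ← Complex.cpow_add _ _ hz1]; norm_num
  have hbb : b * b = z + 1 := by
    rw [hb, ← Complex.cpow_add _ _ hz2]; norm_num
  have hs2 : (a * b) ^ 2 = z ^ 2 - 1 := by
    have : (a * b) ^ 2 = (a * a) * (b * b) := by ring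
    rw [this, haa, hbb]; ring
  have hJ : Jinv z = z - a * b := rfl
  have hJ0 : Jinv z ≠ 0 := by
    intro h0
    have h1' : (z - a * b) * (z + a * b) = 1 := by linear_combination -hs2
    rw [← hJ, h0, zero_mul] at h1'
    exact zero_ne_one h1'
  have hJslit : Jinv z ∈ Complex.slitPlane := by
    rw [Complex.mem_slitPlane_iff]
    by_contra h
    push_neg at h
    obtain ⟨hre, him⟩ := h
    set t : ℝ := (Jinv z).re with htdef
    have hJt : Jinv z = (t : ℂ) := by
      apply Complex.ext <;> simp [him, htdef]
    have ht0 : t ≠ 0 := by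
      intro h'; apply hJ0; rw [hJt, h', Complex.ofReal_zero]
    have htneg : t < 0 := lt_of_le_of_ne hre ht0
    have hab : a * b = z - (t : ℂ) := by rw [← hJt, hJ]; ring
    have h3 : (z - (t : ℂ)) ^ 2 = z ^ 2 - 1 := by rw [← hab]; exact hs2
    have hzt : ((2 * t : ℝ) : ℂ) * z = (((t ^ 2 + 1) : ℝ) : ℂ) := by
      push_cast; linear_combination -h3
    have h2t : ((2 * t : ℝ) : ℂ) ≠ 0 := by
      simp only [Ne, Complex.ofReal_eq_zero]; intro h'; apply ht0; linarith
    have hzval : z = ((((t ^ 2 + 1) / (2 * t)) : ℝ) : ℂ) := by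
      apply mul_left_cancel₀ h2t
      rw [hzt]
      rw [← Complex.ofReal_mul]
      congr 1
      field_simp
    have him0 : z.im = 0 := by rw [hzval, Complex.ofReal_im]
    have hre1 : 1 < z.re := hz him0
    have : z.re = (t ^ 2 + 1) / (2 * t) := by rw [hzval, Complex.ofReal_re]
    rw [this] at hre1
    have hnum : 0 < t ^ 2 + 1 := by positivity
    have hden : 2 * t < 0 := by linarith
    nlinarith [div_neg_of_pos_of_neg hnum hden]
  -- derivative of Jinv
  have hda : HasDerivAt (fun w : ℂ => (w - 1) ^ ((1 : ℂ) / 2))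
      (((1 : ℂ) / 2) * (z - 1) ^ ((1 : ℂ) / 2 - 1) * 1) z :=
    ((hasDerivAt_id z).sub_const 1).cpow_const h1
  have hdb : HasDerivAt (fun w : ℂ => (w + 1) ^ ((1 : ℂ) / 2))
      (((1 : ℂ) / 2) * (z + 1) ^ ((1 : ℂ) / 2 - 1) * 1) z :=
    ((hasDerivAt_id z).add_const 1).cpow_const h2
  have hinv1 : (z - 1) ^ ((1 : ℂ) / 2 - 1) = a⁻¹ := by
    rw [show (1 : ℂ) / 2 - 1 = -(1 / 2) by norm_num, Complex.cpow_neg, ha]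
  have hinv2 : (z + 1) ^ ((1 : ℂ) / 2 - 1) = b⁻¹ := by
    rw [show (1 : ℂ) / 2 - 1 = -(1 / 2) by norm_num, Complex.cpow_neg, hb]
  have hderiv : HasDerivAt Jinv (-(Jinv z) / (a * b)) z := by
    have h := (hasDerivAt_id z).sub (hda.mul hdb)
    have heq : -(Jinv z) / (a * b) =
        1 - ((((1 : ℂ) / 2) * (z - 1) ^ ((1 : ℂ) / 2 - 1) * 1) * b +
          a * (((1 : ℂ) / 2) * (z + 1) ^ ((1 : ℂ) / 2 - 1) * 1)) := by
      rw [hinv1, hinv2, hJ]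
      field_simp
      linear_combination haa + hbb
    rw [heq]
    exact h
  have hab : a * b ≠ 0 := mul_ne_zero ha0 hb0
  have hkey : Jinv z ^ 2 - 1 = -2 * (a * b) * Jinv z := by
    rw [hJ]; linear_combination -hs2
  refine ⟨?_, ?_, ?_⟩
  · have h := (hderiv.clog hJslit).neg
    refine h.congr_deriv (Eq.symm ?_)
    field_simp
  · have h := ((hderiv.pow 2).div_const 4).sub ((hderiv.clog hJslit).const_mul (1 / 2 : ℂ))
    refine h.congr_deriv (Eq.symm ?_)
    field_simp
    linear_combination 4 * hkey
  · intro k hk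
    have hk1 : (k : ℂ) + 1 ≠ 0 := by
      have : (k : ℂ) + 1 = ((k + 1 : ℕ) : ℂ) := by push_cast; ring
      rw [this]; exact_mod_cast Nat.succ_ne_zero k
    have hk2 : (k : ℂ) - 1 ≠ 0 := by
      rw [sub_ne_zero]; exact_mod_cast (by omega : k ≠ 1)
    have h := (((hderiv.pow (k + 1)).div_const ((k : ℂ) + 1)).sub
      ((hderiv.pow (k - 1)).div_const ((k : ℂ) - 1))).const_mul (1 / 2 : ℂ)
    refine h.congr_deriv (Eq.symm ?_)
    have e1 : k + 1 - 1 = k := by omega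
    have e2 : k - 1 - 1 = k - 2 := by omega
    have e3 : ((k + 1 : ℕ) : ℂ) = (k : ℂ) + 1 := by push_cast; ring
    have e4 : ((k - 1 : ℕ) : ℂ) = (k : ℂ) - 1 := by
      push_cast [Nat.cast_sub (by omega : 1 ≤ k)]; ring
    rw [e1, e2, e3, e4] at h ⊢
    have hpows : Jinv z ^ k = Jinv z ^ (k - 2) * Jinv z ^ 2 := by
      rw [← pow_add]; congr 1; omega
    have hJ'' : (-(Jinv z) / (a * b)) * (Jinv z ^ 2 - 1) = 2 * Jinv z ^ 2 := by
      rw [hkey]; field_simp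
    field_simp [hk1, hk2]
    linear_combination (Jinv z + 2 * (a * b)) * hpows +
      (Jinv z ^ (k - 2) * Jinv z) * hkey
end

section
/- Let E, z₀, ζ₀ ∈ ℂ and set c = E/4 + (z₀ − ζ₀)/(8i). Define coefficients A : ℤ × ℤ → ℂ by A_{0,0} = 1, A_{i,j} = 0 whenever i ≤ 0 or j ≤ 0 with (i,j) ≠ (0,0), and for all integers i, j ≥ 1 by the recurrence i·j·A_{i,j} + c·A_{i−1,j−1} − (1/(8i))·A_{i−1,j−2} + (1/(8i))·A_{i−2,j−1} = 0 (where the 'i' in 1/(8i) is the imaginary unit). Then for every u, v ∈ ℂ the family ( A_{i,j}·u^i·v^j )_{(i,j) ∈ ℕ×ℕ} is absolutely summable; in particular the double power series 1 + Σ_{i≥1} Σ_{j≥1} A_{i,j}·(z−z₀)^i·(ζ−ζ₀)^j defining the Riemann function of the gravity Helmholtz operator converges for all z, ζ ∈ ℂ. -/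
set_option maxHeartbeats 1000000

open Filter Set

/-- Auxiliary: factorial of ceiling of n/2. -/
def ghQ (n : ℕ) : ℕ := Nat.factorial ((n + 1) / 2)

lemma ghQ_pos (n : ℕ) : 0 < ghQ n := Nat.factorial_pos _

lemma ghQ_succ_le (a : ℕ) : ghQ (a + 1) ≤ (a + 1) * ghQ a := by
  rcases Nat.even_or_odd a with ⟨m, rfl⟩ | ⟨m, rfl⟩
  · have h1 : (m + m + 1 + 1) / 2 = m + 1 := by omega
    have h2 : (m + m + 1) / 2 = m := by omega
    simp only [ghQ, h1, h2, Nat.factorial_succ]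
    nlinarith [Nat.factorial_pos m]
  · have h1 : (2 * m + 1 + 1 + 1) / 2 = m + 1 := by omega
    have h2 : (2 * m + 1 + 1) / 2 = m + 1 := by omega
    simp only [ghQ, h1, h2]
    nlinarith [Nat.factorial_pos (m + 1)]

lemma ghQ_succ_le' (b : ℕ) : ghQ (b + 1) ≤ (b + 1) * ghQ (b - 1) := by
  rcases b with _ | b'
  · simp [ghQ]
  · have h1 : (b' + 1 + 1 + 1) / 2 = (b' + 1) / 2 + 1 := by omega
    have h2 : (b' + 1 - 1 + 1) / 2 = (b' + 1) / 2 := by omega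
    simp only [ghQ, h1, h2, Nat.factorial_succ]
    have : (b' + 1) / 2 + 1 ≤ b' + 1 + 1 := by omega
    exact Nat.mul_le_mul_right _ this

lemma gh_summable_aux (x : ℝ) (hx : 0 ≤ x) :
    Summable (fun n : ℕ => x ^ n / (ghQ n : ℝ)) := by
  set y := max 1 (2 * x) with hy
  have hy1 : (1 : ℝ) ≤ y := le_max_left _ _
  have hyx : 2 * x ≤ y := le_max_right _ _
  have hy0 : (0 : ℝ) ≤ y := by linarith
  have hb : ∀ n : ℕ, x ^ n / (ghQ n : ℝ) ≤ Real.exp (y ^ 2) * (1 / 2 : ℝ) ^ n := by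
    intro n
    have hm : n ≤ 2 * ((n + 1) / 2) := by omega
    have hQpos : (0 : ℝ) < (ghQ n : ℝ) := by exact_mod_cast ghQ_pos n
    have step1 : x ^ n ≤ (y / 2) ^ n := pow_le_pow_left₀ hx (by linarith) n
    have step2 : y ^ n ≤ (y ^ 2) ^ ((n + 1) / 2) := by
      rw [← pow_mul]
      exact pow_le_pow_right₀ hy1 hm
    have step3 : (y ^ 2) ^ ((n + 1) / 2) / (ghQ n : ℝ) ≤ Real.exp (y ^ 2) := by
      have := Real.pow_div_factorial_le_exp (y ^ 2) (by positivity) ((n + 1) / 2)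
      simpa [ghQ] using this
    calc x ^ n / (ghQ n : ℝ) ≤ (y / 2) ^ n / (ghQ n : ℝ) :=
          div_le_div_of_nonneg_right step1 hQpos.le
      _ = (1 / 2 : ℝ) ^ n * (y ^ n / (ghQ n : ℝ)) := by
          rw [div_pow, div_pow, one_pow]; ring
      _ ≤ (1 / 2 : ℝ) ^ n * ((y ^ 2) ^ ((n + 1) / 2) / (ghQ n : ℝ)) := by
          apply mul_le_mul_of_nonneg_left _ (by positivity)
          exact div_le_div_of_nonneg_right step2 hQpos.le
      _ ≤ (1 / 2 : ℝ) ^ n * Real.exp (y ^ 2) :=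
          mul_le_mul_of_nonneg_left step3 (by positivity)
      _ = Real.exp (y ^ 2) * (1 / 2 : ℝ) ^ n := by ring
  exact Summable.of_nonneg_of_le (fun n => by positivity) hb
    (Summable.mul_left _ (summable_geometric_of_lt_one (by norm_num) (by norm_num)))

/-- The coefficients of the double power series for the Riemann function of
the gravity Helmholtz operator, defined by `A₀₀ = 1`, `Aᵢⱼ = 0` for `i ≤ 0` or `j ≤ 0`
(except `(0,0)`), and the recurrence
`i·j·Aᵢⱼ + c·A_{i-1,j-1} - (1/(8i))·A_{i-1,j-2} + (1/(8i))·A_{i-2,j-1} = 0` for `i, j ≥ 1`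
with `c = E/4 + (z₀-ζ₀)/(8i)`, yield an absolutely summable family `Aᵢⱼ uⁱ vʲ` for all
`u, v ∈ ℂ`; in particular the double power series
`1 + Σᵢ Σⱼ Aᵢⱼ (z-z₀)ⁱ (ζ-ζ₀)ʲ` converges for all `z, ζ ∈ ℂ`. -/
theorem gravityHelmholtz_riemann_series_converges (E z₀ ζ₀ : ℂ)
    (c : ℂ) (hc : c = E / 4 + (z₀ - ζ₀) / (8 * Complex.I))
    (A : ℤ → ℤ → ℂ)
    (hA00 : A 0 0 = 1)
    (hA0 : ∀ i j : ℤ, (i ≤ 0 ∨ j ≤ 0) → (i, j) ≠ (0, 0) → A i j = 0)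
    (hArec : ∀ i j : ℤ, 1 ≤ i → 1 ≤ j →
      (i : ℂ) * (j : ℂ) * A i j + c * A (i - 1) (j - 1)
        - (1 / (8 * Complex.I)) * A (i - 1) (j - 2)
        + (1 / (8 * Complex.I)) * A (i - 2) (j - 1) = 0) :
    ∀ u v : ℂ, Summable (fun p : ℕ × ℕ => ‖A p.1 p.2 * u ^ p.1 * v ^ p.2‖) := by
  set k : ℂ := 1 / (8 * Complex.I) with hk
  have hknorm : ‖k‖ = 1 / 8 := by
    rw [hk, norm_div, norm_mul, Complex.norm_I]
    simp
  set M : ℝ := ‖c‖ + 1 with hM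
  have hM1 : (1 : ℝ) ≤ M := by have := norm_nonneg c; linarith
  have hM0 : (0 : ℝ) ≤ M := by linarith
  -- main bound by strong induction on i + j
  have main : ∀ n : ℕ, ∀ i j : ℕ, i + j ≤ n →
      ‖A i j‖ * ((ghQ i : ℝ) * (ghQ j : ℝ)) ≤ M ^ (i + j) := by
    intro n
    induction n with
    | zero =>
      intro i j hij
      have hi : i = 0 := by omega
      have hj : j = 0 := by omega
      subst hi; subst hj
      simp [hA00, ghQ]
    | succ n ih =>
      intro i j hij
      rcases Nat.eq_or_lt_of_le hij with heq | hlt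
      swap
      · exact ih i j (by omega)
      rcases i with _ | a
      · rcases j with _ | b
        · simp [hA00, ghQ]
        · have h0 : A ((0 : ℕ) : ℤ) (((b + 1 : ℕ)) : ℤ) = 0 := by
            apply hA0 _ _ (Or.inl (by simp))
            simp
            omega
          rw [h0]
          simp only [norm_zero, zero_mul]
          positivity
      rcases j with _ | b
      · have h0 : A (((a + 1 : ℕ)) : ℤ) ((0 : ℕ) : ℤ) = 0 := by
          apply hA0 _ _ (Or.inr (by simp))
          simp
          omega
        rw [h0]
        simp only [norm_zero, zero_mul]
        positivity
      -- main case: i = a + 1, j = b + 1 with a + b + 2 = n + 1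
      have hrec := hArec ((a : ℤ) + 1) ((b : ℤ) + 1) (by omega) (by omega)
      have e1 : ((a : ℤ) + 1) - 1 = (a : ℤ) := by ring
      have e2 : ((b : ℤ) + 1) - 1 = (b : ℤ) := by ring
      have e3 : ((a : ℤ) + 1) - 2 = (a : ℤ) - 1 := by ring
      have e4 : ((b : ℤ) + 1) - 2 = (b : ℤ) - 1 := by ring
      rw [e1, e2, e3, e4] at hrec
      have hAij : ((a : ℂ) + 1) * ((b : ℂ) + 1) * A ((a : ℕ) + 1 : ℕ) ((b : ℕ) + 1 : ℕ) =
          -(c * A a b) + k * A (a : ℤ) ((b : ℤ) - 1) - k * A ((a : ℤ) - 1) (b : ℤ) := by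
        push_cast
        push_cast at hrec
        linear_combination hrec
      -- norms of the sub-terms
      set Qa : ℝ := (ghQ a : ℝ) with hQa
      set Qb : ℝ := (ghQ b : ℝ) with hQb
      set Qa1 : ℝ := (ghQ (a - 1) : ℝ) with hQa1
      set Qb1 : ℝ := (ghQ (b - 1) : ℝ) with hQb1
      set Qi : ℝ := (ghQ (a + 1) : ℝ) with hQi
      set Qj : ℝ := (ghQ (b + 1) : ℝ) with hQj
      have hQa0 : 0 < Qa := by rw [hQa]; exact_mod_cast ghQ_pos a
      have hQb0 : 0 < Qb := by rw [hQb]; exact_mod_cast ghQ_pos b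
      have hQa10 : 0 < Qa1 := by rw [hQa1]; exact_mod_cast ghQ_pos _
      have hQb10 : 0 < Qb1 := by rw [hQb1]; exact_mod_cast ghQ_pos _
      have hQi0 : 0 < Qi := by rw [hQi]; exact_mod_cast ghQ_pos _
      have hQj0 : 0 < Qj := by rw [hQj]; exact_mod_cast ghQ_pos _
      have hQia : Qi ≤ (a + 1) * Qa := by
        rw [hQi, hQa]; exact_mod_cast ghQ_succ_le a
      have hQjb : Qj ≤ (b + 1) * Qb := by
        rw [hQj, hQb]; exact_mod_cast ghQ_succ_le b
      have hQia1 : Qi ≤ (a + 1) * Qa1 := by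
        rw [hQi, hQa1]; exact_mod_cast ghQ_succ_le' a
      have hQjb1 : Qj ≤ (b + 1) * Qb1 := by
        rw [hQj, hQb1]; exact_mod_cast ghQ_succ_le' b
      -- induction-hypothesis bounds
      have h1 : ‖A a b‖ * (Qa * Qb) ≤ M ^ (a + b) := ih a b (by omega)
      have h2 : ‖A (a : ℤ) ((b : ℤ) - 1)‖ * (Qa * Qb1) ≤ M ^ (a + b) := by
        rcases b with _ | b'
        · have : A (a : ℤ) (((0 : ℕ) : ℤ) - 1) = 0 := by
            apply hA0 _ _ (Or.inr (by omega)) (by simp)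
          rw [this]
          simp only [norm_zero, zero_mul]
          positivity
        · have hcast : ((b' + 1 : ℕ) : ℤ) - 1 = (b' : ℤ) := by push_cast; ring
          rw [hcast]
          have hb1 : (b' + 1 : ℕ) - 1 = b' := by omega
          have := ih a b' (by omega)
          calc ‖A (a : ℤ) (b' : ℤ)‖ * (Qa * Qb1) ≤ M ^ (a + b') := by
                rw [hQb1, hb1]; exact this
            _ ≤ M ^ (a + (b' + 1)) := pow_le_pow_right₀ hM1 (by omega)
      have h3 : ‖A ((a : ℤ) - 1) (b : ℤ)‖ * (Qa1 * Qb) ≤ M ^ (a + b) := by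
        rcases a with _ | a'
        · have : A (((0 : ℕ) : ℤ) - 1) (b : ℤ) = 0 := by
            apply hA0 _ _ (Or.inl (by omega)) (by simp)
          rw [this]
          simp only [norm_zero, zero_mul]
          positivity
        · have hcast : ((a' + 1 : ℕ) : ℤ) - 1 = (a' : ℤ) := by push_cast; ring
          rw [hcast]
          have ha1 : (a' + 1 : ℕ) - 1 = a' := by omega
          have := ih a' b (by omega)
          calc ‖A (a' : ℤ) (b : ℤ)‖ * (Qa1 * Qb) ≤ M ^ (a' + b) := by
                rw [hQa1, ha1]; exact this
            _ ≤ M ^ (a' + 1 + b) := pow_le_pow_right₀ hM1 (by omega)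
      -- norm inequality from the recurrence
      have hnorm : ((a : ℝ) + 1) * ((b : ℝ) + 1) * ‖A ((a : ℕ) + 1 : ℕ) ((b : ℕ) + 1 : ℕ)‖ ≤
          ‖c‖ * ‖A a b‖ + (1 / 8) * ‖A (a : ℤ) ((b : ℤ) - 1)‖
            + (1 / 8) * ‖A ((a : ℤ) - 1) (b : ℤ)‖ := by
        have hLHS : ((a : ℝ) + 1) * ((b : ℝ) + 1) * ‖A ((a : ℕ) + 1 : ℕ) ((b : ℕ) + 1 : ℕ)‖ =
            ‖((a : ℂ) + 1) * ((b : ℂ) + 1) * A ((a : ℕ) + 1 : ℕ) ((b : ℕ) + 1 : ℕ)‖ := by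
          rw [norm_mul, norm_mul]
          congr 2
          · rw [show ((a : ℂ) + 1) = ((a + 1 : ℕ) : ℂ) by push_cast; ring,
              Complex.norm_natCast]; push_cast; ring
          · rw [show ((b : ℂ) + 1) = ((b + 1 : ℕ) : ℂ) by push_cast; ring,
              Complex.norm_natCast]; push_cast; ring
        rw [hLHS, hAij]
        calc ‖-(c * A a b) + k * A (a : ℤ) ((b : ℤ) - 1) - k * A ((a : ℤ) - 1) (b : ℤ)‖
            ≤ ‖-(c * A a b) + k * A (a : ℤ) ((b : ℤ) - 1)‖ + ‖k * A ((a : ℤ) - 1) (b : ℤ)‖ :=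
              norm_sub_le _ _
          _ ≤ ‖-(c * A a b)‖ + ‖k * A (a : ℤ) ((b : ℤ) - 1)‖ + ‖k * A ((a : ℤ) - 1) (b : ℤ)‖ := by
              have := norm_add_le (-(c * A a b)) (k * A (a : ℤ) ((b : ℤ) - 1))
              linarith
          _ = ‖c‖ * ‖A a b‖ + (1 / 8) * ‖A (a : ℤ) ((b : ℤ) - 1)‖
                + (1 / 8) * ‖A ((a : ℤ) - 1) (b : ℤ)‖ := by
              rw [norm_neg, norm_mul, norm_mul, norm_mul, hknorm]
      -- combine
      set s := a + b with hs
      have hgoalpow : (a + 1) + (b + 1) = s + 2 := by omega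
      have habpos : (0 : ℝ) < ((a : ℝ) + 1) * ((b : ℝ) + 1) := by positivity
      have key : ((a : ℝ) + 1) * ((b : ℝ) + 1) *
          (‖A ((a : ℕ) + 1 : ℕ) ((b : ℕ) + 1 : ℕ)‖ * (Qi * Qj)) ≤
          ((a : ℝ) + 1) * ((b : ℝ) + 1) * M ^ (s + 2) := by
        have hA1n : (0 : ℝ) ≤ ‖A a b‖ := norm_nonneg _
        have hA2n : (0 : ℝ) ≤ ‖A (a : ℤ) ((b : ℤ) - 1)‖ := norm_nonneg _
        have hA3n : (0 : ℝ) ≤ ‖A ((a : ℤ) - 1) (b : ℤ)‖ := norm_nonneg _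
        have t1 : ‖A a b‖ * (Qi * Qj) ≤ ((a : ℝ) + 1) * ((b : ℝ) + 1) * M ^ s := by
          calc ‖A a b‖ * (Qi * Qj) ≤ ‖A a b‖ * ((((a : ℝ) + 1) * Qa) * (((b : ℝ) + 1) * Qb)) := by
                apply mul_le_mul_of_nonneg_left _ hA1n
                apply mul_le_mul hQia hQjb hQj0.le (by positivity)
            _ = ((a : ℝ) + 1) * ((b : ℝ) + 1) * (‖A a b‖ * (Qa * Qb)) := by ring
            _ ≤ ((a : ℝ) + 1) * ((b : ℝ) + 1) * M ^ s :=
                mul_le_mul_of_nonneg_left h1 habpos.le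
        have t2 : ‖A (a : ℤ) ((b : ℤ) - 1)‖ * (Qi * Qj) ≤
            ((a : ℝ) + 1) * ((b : ℝ) + 1) * M ^ s := by
          calc ‖A (a : ℤ) ((b : ℤ) - 1)‖ * (Qi * Qj)
              ≤ ‖A (a : ℤ) ((b : ℤ) - 1)‖ * ((((a : ℝ) + 1) * Qa) * (((b : ℝ) + 1) * Qb1)) := by
                apply mul_le_mul_of_nonneg_left _ hA2n
                apply mul_le_mul hQia hQjb1 hQj0.le (by positivity)
            _ = ((a : ℝ) + 1) * ((b : ℝ) + 1) * (‖A (a : ℤ) ((b : ℤ) - 1)‖ * (Qa * Qb1)) := by ring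
            _ ≤ ((a : ℝ) + 1) * ((b : ℝ) + 1) * M ^ s :=
                mul_le_mul_of_nonneg_left h2 habpos.le
        have t3 : ‖A ((a : ℤ) - 1) (b : ℤ)‖ * (Qi * Qj) ≤
            ((a : ℝ) + 1) * ((b : ℝ) + 1) * M ^ s := by
          calc ‖A ((a : ℤ) - 1) (b : ℤ)‖ * (Qi * Qj)
              ≤ ‖A ((a : ℤ) - 1) (b : ℤ)‖ * ((((a : ℝ) + 1) * Qa1) * (((b : ℝ) + 1) * Qb)) := by
                apply mul_le_mul_of_nonneg_left _ hA3n
                apply mul_le_mul hQia1 hQjb hQj0.le (by positivity)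
            _ = ((a : ℝ) + 1) * ((b : ℝ) + 1) * (‖A ((a : ℤ) - 1) (b : ℤ)‖ * (Qa1 * Qb)) := by ring
            _ ≤ ((a : ℝ) + 1) * ((b : ℝ) + 1) * M ^ s :=
                mul_le_mul_of_nonneg_left h3 habpos.le
        have hQQ : (0 : ℝ) ≤ Qi * Qj := by positivity
        have step : ((a : ℝ) + 1) * ((b : ℝ) + 1) *
            (‖A ((a : ℕ) + 1 : ℕ) ((b : ℕ) + 1 : ℕ)‖ * (Qi * Qj)) ≤
            (‖c‖ * ‖A a b‖ + (1 / 8) * ‖A (a : ℤ) ((b : ℤ) - 1)‖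
              + (1 / 8) * ‖A ((a : ℤ) - 1) (b : ℤ)‖) * (Qi * Qj) := by
          have h := mul_le_mul_of_nonneg_right hnorm hQQ
          calc ((a : ℝ) + 1) * ((b : ℝ) + 1) *
              (‖A ((a : ℕ) + 1 : ℕ) ((b : ℕ) + 1 : ℕ)‖ * (Qi * Qj))
              = ((a : ℝ) + 1) * ((b : ℝ) + 1) *
                ‖A ((a : ℕ) + 1 : ℕ) ((b : ℕ) + 1 : ℕ)‖ * (Qi * Qj) := by ring
            _ ≤ _ := h
        have hcM : ‖c‖ + 1 / 4 ≤ M ^ 2 := by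
          have h0 := norm_nonneg c
          nlinarith
        have hMs : (0 : ℝ) ≤ M ^ s := by positivity
        calc ((a : ℝ) + 1) * ((b : ℝ) + 1) *
            (‖A ((a : ℕ) + 1 : ℕ) ((b : ℕ) + 1 : ℕ)‖ * (Qi * Qj))
            ≤ (‖c‖ * ‖A a b‖ + (1 / 8) * ‖A (a : ℤ) ((b : ℤ) - 1)‖
              + (1 / 8) * ‖A ((a : ℤ) - 1) (b : ℤ)‖) * (Qi * Qj) := step
          _ = ‖c‖ * (‖A a b‖ * (Qi * Qj)) + (1 / 8) * (‖A (a : ℤ) ((b : ℤ) - 1)‖ * (Qi * Qj))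
              + (1 / 8) * (‖A ((a : ℤ) - 1) (b : ℤ)‖ * (Qi * Qj)) := by ring
          _ ≤ ‖c‖ * (((a : ℝ) + 1) * ((b : ℝ) + 1) * M ^ s)
              + (1 / 8) * (((a : ℝ) + 1) * ((b : ℝ) + 1) * M ^ s)
              + (1 / 8) * (((a : ℝ) + 1) * ((b : ℝ) + 1) * M ^ s) := by
            have g1 := mul_le_mul_of_nonneg_left t1 (norm_nonneg c)
            have g2 := mul_le_mul_of_nonneg_left t2 (by norm_num : (0:ℝ) ≤ 1/8)
            have g3 := mul_le_mul_of_nonneg_left t3 (by norm_num : (0:ℝ) ≤ 1/8)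
            exact add_le_add (add_le_add g1 g2) g3
          _ = ((a : ℝ) + 1) * ((b : ℝ) + 1) * ((‖c‖ + 1 / 4) * M ^ s) := by ring
          _ ≤ ((a : ℝ) + 1) * ((b : ℝ) + 1) * (M ^ 2 * M ^ s) := by
            apply mul_le_mul_of_nonneg_left _ habpos.le
            exact mul_le_mul_of_nonneg_right hcM hMs
          _ = ((a : ℝ) + 1) * ((b : ℝ) + 1) * M ^ (s + 2) := by
            rw [pow_add]; ring
      rw [hgoalpow]
      exact le_of_mul_le_mul_left key habpos
  -- now use the bound to prove summability
  intro u v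
  have hMu : (0 : ℝ) ≤ M * ‖u‖ := by positivity
  have hMv : (0 : ℝ) ≤ M * ‖v‖ := by positivity
  have hsum := (gh_summable_aux (M * ‖u‖) hMu).mul_of_nonneg (gh_summable_aux (M * ‖v‖) hMv)
    (fun n => by positivity) (fun n => by positivity)
  refine Summable.of_nonneg_of_le (fun p => norm_nonneg _) (fun p => ?_) hsum
  obtain ⟨i, j⟩ := p
  simp only
  have hbound := main (i + j) i j le_rfl
  have hQi : (0 : ℝ) < (ghQ i : ℝ) := by exact_mod_cast ghQ_pos i
  have hQj : (0 : ℝ) < (ghQ j : ℝ) := by exact_mod_cast ghQ_pos j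
  have hAb : ‖A i j‖ ≤ M ^ (i + j) / ((ghQ i : ℝ) * (ghQ j : ℝ)) := by
    rw [le_div_iff₀ (by positivity)]
    exact hbound
  calc ‖A i j * u ^ i * v ^ j‖ = ‖A i j‖ * ‖u‖ ^ i * ‖v‖ ^ j := by
        rw [norm_mul, norm_mul, norm_pow, norm_pow]
    _ ≤ (M ^ (i + j) / ((ghQ i : ℝ) * (ghQ j : ℝ))) * ‖u‖ ^ i * ‖v‖ ^ j := by
        apply mul_le_mul_of_nonneg_right _ (by positivity)
        apply mul_le_mul_of_nonneg_right hAb (by positivity)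
    _ = (M * ‖u‖) ^ i / (ghQ i : ℝ) * ((M * ‖v‖) ^ j / (ghQ j : ℝ)) := by
        rw [pow_add, mul_pow, mul_pow]
        field_simp
end
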